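/- Let S be a complete idempotent semiring with dual product ⊙, A, B ∈ S^{n×n}, and suppose that for all X ∈ S^{n×m} the equality B_* ⧵♭ (A* ⊗ X) = (B_* ⧵♭ A*) ⊗ X holds. Then the map P : S^{n×m} → S^{n×m}, X ↦ (B_* ⧵♭ A*)* \ X, is a projector onto Im L_{A*} ∩ Im Λ_{B_*}; more precisely, P(X) is the greatest Y ≤ X satisfying A ⊗ Y ≤ Y ≤ B ⊙ Y. -/
import Mathlib


/-- A complete idempotent semiring: a complete lattice whose join is the (idempotent)
addition, together with a multiplicative monoid structure distributing over
arbitrary joins (hence `⊥` is absorbing). -/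
class CompleteIdempotentSemiring (S : Type*) extends CompleteLattice S, Monoid S where
  mul_sSup : ∀ (a : S) (s : Set S), a * sSup s = ⨆ x ∈ s, a * x
  sSup_mul : ∀ (a : S) (s : Set S), sSup s * a = ⨆ x ∈ s, x * a

/-- Matrices over `S`, with the pointwise (complete-lattice) order. -/
abbrev Mat (n p : ℕ) (S : Type*) := Fin n → Fin p → S

variable {S : Type*} [CompleteIdempotentSemiring S]

/-- A dual product on `S`: associative, with identity `1`, distributing over
arbitrary meets, and with `⊤` absorbing. -/
structure IsDualProduct (od : S → S → S) : Prop where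
  assoc : ∀ a b c : S, od (od a b) c = od a (od b c)
  one_od : ∀ a : S, od 1 a = a
  od_one : ∀ a : S, od a 1 = a
  od_sInf : ∀ (a : S) (s : Set S), od a (sInf s) = ⨅ x ∈ s, od a x
  sInf_od : ∀ (a : S) (s : Set S), od (sInf s) a = ⨅ x ∈ s, od x a
  top_od : ∀ a : S, od ⊤ a = ⊤
  od_top : ∀ a : S, od a ⊤ = ⊤

/-- Dual matrix product: `(A ⊙ X) i j = ⨅ k, A i k ⊙ X k j`. -/
def dmul (od : S → S → S) {n p m : ℕ} (A : Mat n p S) (X : Mat p m S) : Mat n m S :=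
  fun i j => ⨅ k, od (A i k) (X k j)

/-- Ordinary matrix product in the idempotent semiring: `(A ⊗ X) i j = ⨆ k, A i k * X k j`. -/
def mmul {n p m : ℕ} (A : Mat n p S) (X : Mat p m S) : Mat n m S :=
  fun i j => ⨆ k, A i k * X k j

/-- Dual identity matrix: `1` on the diagonal, `⊤` elsewhere. -/
def dualId (n : ℕ) : Mat n n S := fun i j => if i = j then 1 else ⊤

/-- Iterated dual matrix product `B^{⊙k}`. -/
def dpow (od : S → S → S) {n : ℕ} (B : Mat n n S) : ℕ → Mat n n S
  | 0 => dualId n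
  | k + 1 => dmul od B (dpow od B k)

/-- Dual (meet) closure `B_* = ⋀_{k ≥ 0} B^{⊙k}`. -/
def dstar (od : S → S → S) {n : ℕ} (B : Mat n n S) : Mat n n S :=
  ⨅ k : ℕ, dpow od B k

/-- Iterated matrix product `A^k`. -/
def mpow {n : ℕ} (A : Mat n n S) : ℕ → Mat n n S
  | 0 => fun i j => if i = j then 1 else ⊥
  | k + 1 => mmul A (mpow A k)

/-- Kleene star `A^* = ⊕_{k ≥ 0} A^k`. -/
def mstar {n : ℕ} (A : Mat n n S) : Mat n n S :=
  ⨆ k : ℕ, mpow A k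


lemma cis_mul_iSup {ι : Sort*} (a : S) (f : ι → S) : a * (⨆ i, f i) = ⨆ i, a * f i := by
  rw [iSup, CompleteIdempotentSemiring.mul_sSup, iSup_range]

lemma cis_iSup_mul {ι : Sort*} (a : S) (f : ι → S) : (⨆ i, f i) * a = ⨆ i, f i * a := by
  rw [iSup, CompleteIdempotentSemiring.sSup_mul, iSup_range]

lemma cis_mul_sup (c a b : S) : c * (a ⊔ b) = c * a ⊔ c * b := by
  have := cis_mul_iSup c (fun i : Bool => bif i then a else b)
  simpa [iSup_bool_eq] using this

lemma cis_sup_mul (c a b : S) : (a ⊔ b) * c = a * c ⊔ b * c := by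
  have := cis_iSup_mul c (fun i : Bool => bif i then a else b)
  simpa [iSup_bool_eq] using this

lemma cis_mul_mono_left {a b : S} (h : a ≤ b) (c : S) : c * a ≤ c * b := by
  calc c * a ≤ c * a ⊔ c * b := le_sup_left
  _ = c * (a ⊔ b) := (cis_mul_sup c a b).symm
  _ = c * b := by rw [sup_eq_right.mpr h]

lemma cis_mul_mono_right {a b : S} (h : a ≤ b) (c : S) : a * c ≤ b * c := by
  calc a * c ≤ a * c ⊔ b * c := le_sup_left
  _ = (a ⊔ b) * c := (cis_sup_mul c a b).symm
  _ = b * c := by rw [sup_eq_right.mpr h]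

lemma cis_bot_mul (a : S) : (⊥ : S) * a = ⊥ := by
  have := CompleteIdempotentSemiring.sSup_mul a (∅ : Set S)
  simpa using this

lemma cis_mul_bot (a : S) : a * (⊥ : S) = ⊥ := by
  have := CompleteIdempotentSemiring.mul_sSup a (∅ : Set S)
  simpa using this

variable {od : S → S → S}

lemma cis_od_iInf (hod : IsDualProduct od) {ι : Sort*} (a : S) (f : ι → S) :
    od a (⨅ i, f i) = ⨅ i, od a (f i) := by
  rw [iInf, hod.od_sInf, iInf_range]

lemma cis_iInf_od (hod : IsDualProduct od) {ι : Sort*} (a : S) (f : ι → S) :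
    od (⨅ i, f i) a = ⨅ i, od (f i) a := by
  rw [iInf, hod.sInf_od, iInf_range]

lemma cis_od_inf (hod : IsDualProduct od) (c a b : S) : od c (a ⊓ b) = od c a ⊓ od c b := by
  have := cis_od_iInf hod c (fun i : Bool => bif i then a else b)
  simpa [iInf_bool_eq] using this

lemma cis_inf_od (hod : IsDualProduct od) (c a b : S) : od (a ⊓ b) c = od a c ⊓ od b c := by
  have := cis_iInf_od hod c (fun i : Bool => bif i then a else b)
  simpa [iInf_bool_eq] using this

lemma cis_od_mono_left (hod : IsDualProduct od) {a b : S} (h : a ≤ b) (c : S) :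
    od c a ≤ od c b := by
  calc od c a = od c (a ⊓ b) := by rw [inf_eq_left.mpr h]
  _ = od c a ⊓ od c b := cis_od_inf hod c a b
  _ ≤ od c b := inf_le_right

lemma cis_od_mono_right (hod : IsDualProduct od) {a b : S} (h : a ≤ b) (c : S) :
    od a c ≤ od b c := by
  calc od a c = od (a ⊓ b) c := by rw [inf_eq_left.mpr h]
  _ = od a c ⊓ od b c := cis_inf_od hod c a b
  _ ≤ od b c := inf_le_right

-- matrix lemmas
lemma mmul_mono {n p m : ℕ} {A A' : Mat n p S} {X X' : Mat p m S}
    (hA : A ≤ A') (hX : X ≤ X') : mmul A X ≤ mmul A' X' := by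
  intro i j
  refine iSup_mono fun k => ?_
  exact le_trans (cis_mul_mono_left (hX k j) _) (cis_mul_mono_right (hA i k) _)

lemma mmul_assoc {n p q m : ℕ} (A : Mat n p S) (B : Mat p q S) (C : Mat q m S) :
    mmul (mmul A B) C = mmul A (mmul B C) := by
  funext i j
  show ⨆ l, (⨆ k, A i k * B k l) * C l j = ⨆ k, A i k * ⨆ l, B k l * C l j
  calc ⨆ l, (⨆ k, A i k * B k l) * C l j
      = ⨆ l, ⨆ k, (A i k * B k l) * C l j := by simp_rw [cis_iSup_mul]
    _ = ⨆ k, ⨆ l, A i k * (B k l * C l j) := by rw [iSup_comm]; simp_rw [mul_assoc]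
    _ = ⨆ k, A i k * ⨆ l, B k l * C l j := by simp_rw [cis_mul_iSup]

lemma mpow_zero_mmul {n m : ℕ} (A : Mat n n S) (Y : Mat n m S) : mmul (mpow A 0) Y = Y := by
  funext i j
  show ⨆ k, (if i = k then 1 else ⊥) * Y k j = Y i j
  apply le_antisymm
  · refine iSup_le fun k => ?_
    by_cases h : i = k
    · subst h; simp
    · simp [h, cis_bot_mul]
  · exact le_iSup_of_le i (by simp)

lemma mpow_one {n : ℕ} (A : Mat n n S) : mpow A 1 = A := by
  funext i j
  show ⨆ k, A i k * (if k = j then 1 else ⊥) = A i j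
  apply le_antisymm
  · refine iSup_le fun k => ?_
    by_cases h : k = j
    · subst h; simp
    · simp [h, cis_mul_bot]
  · exact le_iSup_of_le j (by simp)

lemma mmul_iSup_left {n p m : ℕ} (F : ℕ → Mat n p S) (Y : Mat p m S) :
    mmul (⨆ k, F k) Y = ⨆ k, mmul (F k) Y := by
  funext i j
  simp only [mmul, iSup_apply]
  simp_rw [cis_iSup_mul]
  rw [iSup_comm]

lemma mmul_iSup_right {n p m : ℕ} (A : Mat n p S) (F : ℕ → Mat p m S) :
    mmul A (⨆ k, F k) = ⨆ k, mmul A (F k) := by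
  funext i j
  simp only [mmul, iSup_apply]
  simp_rw [cis_mul_iSup]
  rw [iSup_comm]

lemma mstar_mmul {n m : ℕ} (A : Mat n n S) (Y : Mat n m S) :
    mmul (mstar A) Y = ⨆ k, mmul (mpow A k) Y := mmul_iSup_left _ _

lemma le_mstar_mmul {n m : ℕ} (A : Mat n n S) (Y : Mat n m S) : Y ≤ mmul (mstar A) Y := by
  rw [mstar_mmul]
  exact le_iSup_of_le 0 (mpow_zero_mmul A Y).ge

lemma mstar_mmul_le {n m : ℕ} {A : Mat n n S} {Y : Mat n m S}
    (h : mmul A Y ≤ Y) : mmul (mstar A) Y ≤ Y := by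
  rw [mstar_mmul]
  refine iSup_le fun k => ?_
  induction k with
  | zero => exact (mpow_zero_mmul A Y).le
  | succ k ih =>
    show mmul (mmul A (mpow A k)) Y ≤ Y
    rw [mmul_assoc]
    exact le_trans (mmul_mono le_rfl ih) h

lemma le_mstar {n : ℕ} (A : Mat n n S) : A ≤ mstar A := by
  exact (mpow_one A).symm.trans_le (le_iSup (mpow A) 1)

lemma mmul_mstar_le {n : ℕ} (A : Mat n n S) : mmul A (mstar A) ≤ mstar A := by
  rw [mstar, mmul_iSup_right]
  exact iSup_le fun k => le_iSup (mpow A) (k + 1)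

lemma mstar_mmul_mstar_mmul_le {n m : ℕ} (A : Mat n n S) (Z : Mat n m S) :
    mmul (mstar A) (mmul (mstar A) Z) ≤ mmul (mstar A) Z := by
  apply mstar_mmul_le
  rw [← mmul_assoc]
  exact mmul_mono (mmul_mstar_le A) le_rfl

-- dual matrix lemmas
lemma dmul_mono (hod : IsDualProduct od) {n p m : ℕ} {A A' : Mat n p S} {X X' : Mat p m S}
    (hA : A ≤ A') (hX : X ≤ X') : dmul od A X ≤ dmul od A' X' := by
  intro i j
  refine iInf_mono fun k => ?_
  exact le_trans (cis_od_mono_right hod (hA i k) _) (cis_od_mono_left hod (hX k j) _)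

lemma dmul_assoc (hod : IsDualProduct od) {n p q m : ℕ}
    (A : Mat n p S) (B : Mat p q S) (C : Mat q m S) :
    dmul od (dmul od A B) C = dmul od A (dmul od B C) := by
  funext i j
  show ⨅ l, od (⨅ k, od (A i k) (B k l)) (C l j) = ⨅ k, od (A i k) (⨅ l, od (B k l) (C l j))
  calc ⨅ l, od (⨅ k, od (A i k) (B k l)) (C l j)
      = ⨅ l, ⨅ k, od (od (A i k) (B k l)) (C l j) := by simp_rw [cis_iInf_od hod]
    _ = ⨅ k, ⨅ l, od (A i k) (od (B k l) (C l j)) := by rw [iInf_comm]; simp_rw [hod.assoc]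
    _ = ⨅ k, od (A i k) (⨅ l, od (B k l) (C l j)) := by simp_rw [cis_od_iInf hod]

lemma dualId_dmul (hod : IsDualProduct od) {n m : ℕ} (Y : Mat n m S) :
    dmul od (dualId n) Y = Y := by
  funext i j
  show ⨅ k, od (if i = k then 1 else ⊤) (Y k j) = Y i j
  apply le_antisymm
  · exact iInf_le_of_le i (by simp [hod.one_od])
  · refine le_iInf fun k => ?_
    by_cases h : i = k
    · subst h; simp [hod.one_od]
    · simp [h, hod.top_od]

lemma dpow_one (hod : IsDualProduct od) {n : ℕ} (B : Mat n n S) : dpow od B 1 = B := by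
  funext i j
  show ⨅ k, od (B i k) (if k = j then 1 else ⊤) = B i j
  apply le_antisymm
  · exact iInf_le_of_le j (by simp [hod.od_one])
  · refine le_iInf fun k => ?_
    by_cases h : k = j
    · subst h; simp [hod.od_one]
    · simp [h, hod.od_top]

lemma dmul_iInf_left (hod : IsDualProduct od) {n p m : ℕ} (F : ℕ → Mat n p S) (Y : Mat p m S) :
    dmul od (⨅ k, F k) Y = ⨅ k, dmul od (F k) Y := by
  funext i j
  simp only [dmul, iInf_apply]
  simp_rw [cis_iInf_od hod]
  rw [iInf_comm]

lemma dstar_dmul_le (hod : IsDualProduct od) {n m : ℕ} (B : Mat n n S) (Y : Mat n m S) :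
    dmul od (dstar od B) Y ≤ Y := by
  rw [dstar, dmul_iInf_left hod]
  exact iInf_le_of_le 0 (dualId_dmul hod Y).le

lemma le_dstar_dmul (hod : IsDualProduct od) {n m : ℕ} {B : Mat n n S} {Y : Mat n m S}
    (h : Y ≤ dmul od B Y) : Y ≤ dmul od (dstar od B) Y := by
  rw [dstar, dmul_iInf_left hod]
  refine le_iInf fun k => ?_
  induction k with
  | zero => exact (dualId_dmul hod Y).ge
  | succ k ih =>
    show Y ≤ dmul od (dmul od B (dpow od B k)) Y
    rw [dmul_assoc hod]
    exact le_trans h (dmul_mono hod le_rfl ih)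

lemma dstar_le (hod : IsDualProduct od) {n : ℕ} (B : Mat n n S) : dstar od B ≤ B := by
  exact (iInf_le (dpow od B) 1).trans (dpow_one hod B).le

theorem projector_onto_sandwich_solutions
    (od : S → S → S) (hod : IsDualProduct od) {n m : ℕ}
    (lres : ∀ {q : ℕ}, Mat n n S → Mat n q S → Mat n q S)
    (hlres : ∀ {q : ℕ} (M : Mat n n S) (Y : Mat n q S),
      IsLeast {Z : Mat n q S | Y ≤ dmul od M Z} (lres M Y))
    (ldiv : ∀ {q : ℕ}, Mat n n S → Mat n q S → Mat n q S)
    (hldiv : ∀ {q : ℕ} (M : Mat n n S) (Y : Mat n q S),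
      IsGreatest {Z : Mat n q S | mmul M Z ≤ Y} (ldiv M Y))
    (A B : Mat n n S)
    (hcomm : ∀ X : Mat n m S,
      lres (dstar od B) (mmul (mstar A) X) = mmul (lres (dstar od B) (mstar A)) X) :
    (∀ X : Mat n m S,
        ldiv (mstar (lres (dstar od B) (mstar A)))
            (ldiv (mstar (lres (dstar od B) (mstar A))) X)
          = ldiv (mstar (lres (dstar od B) (mstar A))) X) ∧
      ∀ X : Mat n m S,
        IsGreatest {Y : Mat n m S | Y ≤ X ∧ mmul A Y ≤ Y ∧ Y ≤ dmul od B Y}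
          (ldiv (mstar (lres (dstar od B) (mstar A))) X) := by
  set C : Mat n n S := lres (dstar od B) (mstar A) with hC
  have claim2 : ∀ Y : Mat n m S, mmul A Y ≤ Y → Y ≤ dmul od B Y → mmul (mstar C) Y ≤ Y := by
    intro Y hAY hBY
    have hAeq : mmul (mstar A) Y = Y := le_antisymm (mstar_mmul_le hAY) (le_mstar_mmul A Y)
    have hBle : Y ≤ dmul od (dstar od B) Y := le_dstar_dmul hod hBY
    have hCY : mmul C Y ≤ Y := by
      have h1 : mmul C Y = lres (dstar od B) Y := by rw [← hcomm Y, hAeq]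
      rw [h1]
      exact (hlres (dstar od B) Y).2 hBle
    exact mstar_mmul_le hCY
  have claim1 : ∀ Y : Mat n m S, mmul (mstar C) Y ≤ Y → mmul A Y ≤ Y ∧ Y ≤ dmul od B Y := by
    intro Y h
    have h1 : mmul (mstar A) Y ≤ dmul od (dstar od B) (mmul C Y) := by
      have h0 := (hlres (dstar od B) (mmul (mstar A) Y)).1
      rwa [hcomm Y] at h0
    have h2 : dmul od (dstar od B) (mmul C Y) ≤ mmul C Y := dstar_dmul_le hod _ _
    have h3 : mmul C Y ≤ mmul (mstar C) Y := mmul_mono (le_mstar C) le_rfl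
    have hy1 : Y ≤ mmul (mstar A) Y := le_mstar_mmul A Y
    have hchain : mmul (mstar A) Y = Y :=
      le_antisymm (h1.trans (h2.trans (h3.trans h))) hy1
    have hCYeq : mmul C Y = Y :=
      le_antisymm ((h3.trans h)) (hy1.trans (h1.trans h2))
    have hdst : Y ≤ dmul od (dstar od B) Y := by
      have h4 := h1
      rw [hCYeq, hchain] at h4
      exact h4
    constructor
    · have h5 : mmul A Y ≤ mmul (mstar A) Y := mmul_mono (le_mstar A) le_rfl
      rwa [hchain] at h5
    · exact hdst.trans (dmul_mono hod (dstar_le hod B) le_rfl)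
  have hfix : ∀ X : Mat n m S, mmul (mstar C) (ldiv (mstar C) X) ≤ ldiv (mstar C) X := by
    intro X
    apply (hldiv (mstar C) X).2
    exact (mstar_mmul_mstar_mmul_le C _).trans (hldiv (mstar C) X).1
  constructor
  · intro X
    apply le_antisymm
    · exact (le_mstar_mmul C _).trans (hldiv (mstar C) (ldiv (mstar C) X)).1
    · exact (hldiv (mstar C) (ldiv (mstar C) X)).2 (hfix X)
  · intro X
    constructor
    · exact ⟨(le_mstar_mmul C _).trans (hldiv (mstar C) X).1,
        (claim1 _ (hfix X)).1, (claim1 _ (hfix X)).2⟩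
    · rintro Y ⟨hYX, hAY2, hBY2⟩
      exact (hldiv (mstar C) X).2 ((claim2 Y hAY2 hBY2).trans hYX)
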